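/- Weak law of large numbers: Let E be a sublinear expectation on the space X of bounded measurable real-valued functions on (Ω, F), with upper capacity C(A) := E(1_A). Let {ξ_n}_{n≥1} ⊂ X be pairwise uncorrelated with respect to E and suppose sup_{n≥1} ( E((ξ_n − E(ξ_n))²) + (E(ξ_n) + E(−ξ_n))² ) < ∞. Then there exist constants {λ_i}_{i≥1} with λ_i ∈ [−E(−ξ_i), E(ξ_i)] such that for every ε > 0, C( { ω : |(1/n) Σ_{i=1}^{n} (ξ_i(ω) − λ_i)| > ε } ) → 0 as n → ∞. -/

import Mathlib

open MeasureTheory Set Filter Topology Classical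

/-- The space of bounded measurable real-valued functions on `Ω`, as a submodule of `Ω → ℝ`. -/
def BM (Ω : Type*) [MeasurableSpace Ω] : Submodule ℝ (Ω → ℝ) where
  carrier := {f | Measurable f ∧ ∃ M : ℝ, ∀ ω, |f ω| ≤ M}
  zero_mem' := ⟨measurable_const, 0, by simp⟩
  add_mem' := by
    rintro f g ⟨hf, Mf, hMf⟩ ⟨hg, Mg, hMg⟩
    exact ⟨hf.add hg, Mf + Mg, fun ω => (abs_add_le _ _).trans (add_le_add (hMf ω) (hMg ω))⟩
  smul_mem' := by
    rintro c f ⟨hf, Mf, hMf⟩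
    refine ⟨hf.const_smul c, |c| * Mf, fun ω => ?_⟩
    simp only [Pi.smul_apply, smul_eq_mul, abs_mul]
    exact mul_le_mul_of_nonneg_left (hMf ω) (abs_nonneg c)

variable {Ω : Type*} [MeasurableSpace Ω]

lemma mem_BM {f : Ω → ℝ} (hf : Measurable f) (M : ℝ) (hM : ∀ ω, |f ω| ≤ M) : f ∈ BM Ω :=
  ⟨hf, M, hM⟩

lemma BM.measurable (ξ : BM Ω) : Measurable (ξ : Ω → ℝ) := ξ.2.1

lemma BM.bounded (ξ : BM Ω) : ∃ M : ℝ, ∀ ω, |(ξ : Ω → ℝ) ω| ≤ M := ξ.2.2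

/-- A sublinear expectation on the space of bounded measurable functions. -/
structure SLE (Ω : Type*) [MeasurableSpace Ω] where
  E : BM Ω → ℝ
  mono : ∀ ξ η : BM Ω, (∀ ω, (η : Ω → ℝ) ω ≤ (ξ : Ω → ℝ) ω) → E η ≤ E ξ
  const_preserve : ∀ (c : ℝ) (h : (fun _ : Ω => c) ∈ BM Ω), E ⟨fun _ => c, h⟩ = c
  subadd : ∀ ξ η : BM Ω, E (ξ + η) ≤ E ξ + E η
  pos_homog : ∀ (c : ℝ), 0 ≤ c → ∀ ξ : BM Ω, E (c • ξ) = c * E ξ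

/-- The constant function as an element of `BM Ω`. -/
def constBM (Ω : Type*) [MeasurableSpace Ω] (c : ℝ) : BM Ω :=
  ⟨fun _ => c, mem_BM measurable_const |c| fun _ => le_refl _⟩

/-- The indicator function of a measurable set as an element of `BM Ω`. -/
noncomputable def indBM {Ω : Type*} [MeasurableSpace Ω] (A : Set Ω) (hA : MeasurableSet A) : BM Ω :=
  ⟨A.indicator fun _ => 1,
    mem_BM (measurable_const.indicator hA) 1 fun ω => by
      by_cases h : ω ∈ A <;> simp [Set.indicator_apply, h]⟩

/-- The product of two bounded measurable functions. -/
noncomputable def mulBM (ξ η : BM Ω) : BM Ω := by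
  refine ⟨fun ω => (ξ : Ω → ℝ) ω * (η : Ω → ℝ) ω, ?_⟩
  obtain ⟨Mf, hMf⟩ := BM.bounded ξ
  obtain ⟨Mg, hMg⟩ := BM.bounded η
  refine mem_BM ((BM.measurable ξ).mul (BM.measurable η)) (max Mf 0 * max Mg 0) fun ω => ?_
  rw [abs_mul]
  exact mul_le_mul ((hMf ω).trans (le_max_left _ _)) ((hMg ω).trans (le_max_left _ _))
    (abs_nonneg _) (le_max_right _ _)

/-- The upper capacity associated to a sublinear expectation: `C(A) = E(1_A)` for measurable `A`
(junk value `0` on non-measurable sets). -/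
noncomputable def SLE.cap (𝔼 : SLE Ω) (A : Set Ω) : ℝ :=
  if h : MeasurableSet A then 𝔼.E (indBM A h) else 0

/-- The lower capacity associated to a sublinear expectation: `c(A) = -E(-1_A)` for measurable `A`
(junk value `0` on non-measurable sets). -/
noncomputable def SLE.lcap (𝔼 : SLE Ω) (A : Set Ω) : ℝ :=
  if h : MeasurableSet A then -𝔼.E (-(indBM A h)) else 0

/-- A linear expectation dominated by the sublinear expectation `𝔼`. -/
def Dominated (𝔼 : SLE Ω) (L : BM Ω →ₗ[ℝ] ℝ) : Prop := ∀ ξ : BM Ω, L ξ ≤ 𝔼.E ξ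

/-- `ξ` and `η` are uncorrelated with respect to `𝔼` if `L(ξη) = L(ξ)L(η)` for every
linear expectation `L` dominated by `𝔼`. -/
def Uncorrelated (𝔼 : SLE Ω) (ξ η : BM Ω) : Prop :=
  ∀ L : BM Ω →ₗ[ℝ] ℝ, Dominated 𝔼 L → L (mulBM ξ η) = L ξ * L η

/-- `𝔼` is regular: if `ξ n ↓ 0` pointwise then `𝔼.E (ξ n) ↓ 0`. -/
def SLE.Regular (𝔼 : SLE Ω) : Prop :=
  ∀ ξ : ℕ → BM Ω, (∀ ω, Antitone fun n => (ξ n : Ω → ℝ) ω) →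
    (∀ ω, Tendsto (fun n => (ξ n : Ω → ℝ) ω) atTop (𝓝 0)) →
    Tendsto (fun n => 𝔼.E (ξ n)) atTop (𝓝 0)

/-- The σ-field generated by `ξ a, …, ξ b`. -/
def sigmaGen (ξ : ℕ → BM Ω) (a b : ℕ) : MeasurableSpace Ω :=
  ⨆ i ∈ Set.Icc a b, MeasurableSpace.comap (fun ω => (ξ i : Ω → ℝ) ω) inferInstance

/-- `{ξ_n}_{n ≥ 1}` is an independent sequence under `𝔼`: pairwise uncorrelated, and
`C(A ∩ B) ≤ C(A) C(B)` whenever `A ∈ σ(ξ_1, …, ξ_m)` and `B ∈ σ(ξ_{m+1}, …, ξ_n)`, `m < n`. -/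
def IndepSeq (𝔼 : SLE Ω) (ξ : ℕ → BM Ω) : Prop :=
  (∀ i j, 1 ≤ i → 1 ≤ j → i ≠ j → Uncorrelated 𝔼 (ξ i) (ξ j)) ∧
  ∀ m n : ℕ, 1 ≤ m → m < n → ∀ A B : Set Ω,
    MeasurableSet[sigmaGen ξ 1 m] A → MeasurableSet[sigmaGen ξ (m + 1) n] B →
    𝔼.cap (A ∩ B) ≤ 𝔼.cap A * 𝔼.cap B

/-- Assumption (H₀): for every disjoint measurable cover `{A_n}` of `Ω`,
the series `Σ C(A_n)` has bounded partial sums. -/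
def H0 (𝔼 : SLE Ω) : Prop :=
  ∀ A : ℕ → Set Ω, (∀ n, MeasurableSet (A n)) → Pairwise (Function.onFun Disjoint A) →
    (⋃ n, A n) = Set.univ → ∃ M : ℝ, ∀ N : ℕ, ∑ n ∈ Finset.range N, 𝔼.cap (A n) < M

section Helpers

variable {Ω : Type*} [MeasurableSpace Ω]

lemma SLE.E_zero (𝔼 : SLE Ω) : 𝔼.E 0 = 0 := by
  have h := 𝔼.pos_homog 0 le_rfl 0
  simpa using h

lemma SLE.E_const (𝔼 : SLE Ω) (c : ℝ) : 𝔼.E (constBM Ω c) = c :=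
  𝔼.const_preserve c _

lemma SLE.E_nonneg (𝔼 : SLE Ω) (η : BM Ω) (h : ∀ ω, 0 ≤ (η : Ω → ℝ) ω) : 0 ≤ 𝔼.E η := by
  have := 𝔼.mono η 0 (by simpa using h)
  rwa [𝔼.E_zero] at this

lemma Dominated.monotone {𝔼 : SLE Ω} {L : BM Ω →ₗ[ℝ] ℝ} (hL : Dominated 𝔼 L) {ξ η : BM Ω}
    (h : ∀ ω, (ξ : Ω → ℝ) ω ≤ (η : Ω → ℝ) ω) : L ξ ≤ L η := by
  have h1 : L (ξ - η) ≤ 𝔼.E (ξ - η) := hL _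
  have h2 : 𝔼.E (ξ - η) ≤ 𝔼.E 0 := by
    refine 𝔼.mono 0 (ξ - η) fun ω => ?_
    simp only [Submodule.coe_sub, Pi.sub_apply, Submodule.coe_zero, Pi.zero_apply]
    linarith [h ω]
  rw [𝔼.E_zero] at h2
  have := map_sub L ξ η
  linarith [h1, h2, this.symm.le, this.le]

lemma Dominated.const {𝔼 : SLE Ω} {L : BM Ω →ₗ[ℝ] ℝ} (hL : Dominated 𝔼 L) (c : ℝ) :
    L (constBM Ω c) = c := by
  have h1 : L (constBM Ω c) ≤ c := by
    have := hL (constBM Ω c); rwa [𝔼.E_const] at this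
  have hneg : -(constBM Ω c) = constBM Ω (-c) := by
    apply Subtype.ext; funext ω; rfl
  have h2 : L (-(constBM Ω c)) ≤ -c := by
    rw [hneg]; have := hL (constBM Ω (-c)); rwa [𝔼.E_const] at this
  rw [map_neg] at h2
  linarith

/-- Hahn–Banach: every value of a sublinear expectation is attained by a dominated linear
expectation. -/
lemma SLE.exists_dominated (𝔼 : SLE Ω) [Nonempty Ω] (η : BM Ω) :
    ∃ L : BM Ω →ₗ[ℝ] ℝ, Dominated 𝔼 L ∧ L η = 𝔼.E η := by
  have N_hom : ∀ c : ℝ, 0 < c → ∀ x : BM Ω, 𝔼.E (c • x) = c * 𝔼.E x := fun c hc x =>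
    𝔼.pos_homog c hc.le x
  have N_add : ∀ x y : BM Ω, 𝔼.E (x + y) ≤ 𝔼.E x + 𝔼.E y := 𝔼.subadd
  have key : ∀ η : BM Ω, η ≠ 0 → ∃ L : BM Ω →ₗ[ℝ] ℝ, Dominated 𝔼 L ∧ L η = 𝔼.E η := by
    intro η hη
    set f : BM Ω →ₗ.[ℝ] ℝ := LinearPMap.mkSpanSingleton η (𝔼.E η) hη with hf
    have hfle : ∀ x : f.domain, f x ≤ 𝔼.E x := by
      rintro ⟨x, hx⟩
      rw [LinearPMap.domain_mkSpanSingleton] at hx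
      obtain ⟨c, rfl⟩ := Submodule.mem_span_singleton.mp hx
      have happ : f ⟨c • η, hx⟩ = c • 𝔼.E η := LinearPMap.mkSpanSingleton'_apply _ _ _ c _
      rw [happ]
      show c • 𝔼.E η ≤ 𝔼.E (c • η)
      rcases le_or_gt 0 c with hc | hc
      · rw [𝔼.pos_homog c hc η]; simp [smul_eq_mul]
      · have hrw : c • η = (-c) • (-η) := by rw [smul_neg, neg_smul, neg_neg]
        rw [hrw, 𝔼.pos_homog (-c) (by linarith) (-η)]
        have hsum : 0 ≤ 𝔼.E η + 𝔼.E (-η) := by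
          have h0 : 𝔼.E (η + -η) ≤ 𝔼.E η + 𝔼.E (-η) := 𝔼.subadd η (-η)
          rwa [add_neg_cancel, 𝔼.E_zero] at h0
        simp only [smul_eq_mul]
        nlinarith
    obtain ⟨g, hg1, hg2⟩ := exists_extension_of_le_sublinear f 𝔼.E N_hom N_add hfle
    refine ⟨g, hg2, ?_⟩
    have hmem : η ∈ f.domain := by
      rw [LinearPMap.domain_mkSpanSingleton]; exact Submodule.mem_span_singleton_self η
    have := hg1 ⟨η, hmem⟩
    rw [this]
    exact LinearPMap.mkSpanSingleton_apply ℝ ℝ hη (𝔼.E η)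
  by_cases hη : η = 0
  · have hone : (constBM Ω (1 : ℝ)) ≠ 0 := by
      intro h
      have := congrFun (congrArg Subtype.val h) (Classical.arbitrary Ω)
      have h1 : (1 : ℝ) = 0 := this
      exact one_ne_zero h1
    obtain ⟨L, hL, -⟩ := key _ hone
    exact ⟨L, hL, by rw [hη, map_zero, 𝔼.E_zero]⟩
  · exact key η hη

lemma SLE.E_le_of_forall_dominated (𝔼 : SLE Ω) [Nonempty Ω] (η : BM Ω) (B : ℝ)
    (h : ∀ L : BM Ω →ₗ[ℝ] ℝ, Dominated 𝔼 L → L η ≤ B) : 𝔼.E η ≤ B := by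
  obtain ⟨L, hL, hLη⟩ := 𝔼.exists_dominated η
  rw [← hLη]; exact h L hL

/-- Expansion of the product of shifted variables under a dominated linear expectation. -/
lemma L_mul_shift {𝔼 : SLE Ω} {L : BM Ω →ₗ[ℝ] ℝ} (hL : Dominated 𝔼 L) {ξi ξj : BM Ω}
    (hu : Uncorrelated 𝔼 ξi ξj) (a b : ℝ) :
    L (mulBM (ξi - constBM Ω a) (ξj - constBM Ω b)) = (L ξi - a) * (L ξj - b) := by
  have hexp : mulBM (ξi - constBM Ω a) (ξj - constBM Ω b)
      = mulBM ξi ξj - a • ξj - b • ξi + constBM Ω (a * b) := by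
    apply Subtype.ext; funext ω
    show ((ξi : Ω → ℝ) ω - a) * ((ξj : Ω → ℝ) ω - b) = _
    simp only [Submodule.coe_add, Submodule.coe_sub, Submodule.coe_smul, Pi.add_apply,
      Pi.sub_apply, Pi.smul_apply, smul_eq_mul]
    show _ = (ξi : Ω → ℝ) ω * (ξj : Ω → ℝ) ω - a * (ξj : Ω → ℝ) ω - b * (ξi : Ω → ℝ) ω + a * b
    ring
  rw [hexp, map_add, map_sub, map_sub, L.map_smul, L.map_smul, hL.const, hu L hL]
  simp only [smul_eq_mul]
  ring

/-- Key consequence of pairwise uncorrelatedness: dominated linear expectations cannot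
disagree on the means of two distinct variables. -/
lemma uncorr_mean_eq {𝔼 : SLE Ω} {ξi ξj : BM Ω} (hu : Uncorrelated 𝔼 ξi ξj)
    {L L₀ : BM Ω →ₗ[ℝ] ℝ} (hL : Dominated 𝔼 L) (hL₀ : Dominated 𝔼 L₀) :
    (L ξi - L₀ ξi) * (L ξj - L₀ ξj) = 0 := by
  set M : BM Ω →ₗ[ℝ] ℝ := (1 / 2 : ℝ) • L + (1 / 2 : ℝ) • L₀ with hM
  have hMdom : Dominated 𝔼 M := by
    intro ζ
    have h1 := hL ζ
    have h2 := hL₀ ζ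
    simp only [hM, LinearMap.add_apply, LinearMap.smul_apply, smul_eq_mul]
    linarith
  have e1 := hu L hL
  have e2 := hu L₀ hL₀
  have e3 := hu M hMdom
  simp only [hM, LinearMap.add_apply, LinearMap.smul_apply, smul_eq_mul] at e3
  nlinarith [e1, e2, e3]

lemma mulBM_sum_sum (s : Finset ℕ) (d : ℕ → BM Ω) :
    mulBM (∑ i ∈ s, d i) (∑ i ∈ s, d i) = ∑ i ∈ s, ∑ j ∈ s, mulBM (d i) (d j) := by
  apply Subtype.ext
  funext ω
  have hcoe : ∀ t : Finset ℕ, ∀ g : ℕ → BM Ω,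
      ((∑ i ∈ t, g i : BM Ω) : Ω → ℝ) ω = ∑ i ∈ t, (g i : Ω → ℝ) ω := by
    intro t g
    induction t using Finset.induction_on with
    | empty => simp
    | insert h ih => simp_all [Finset.sum_insert]
  show ((∑ i ∈ s, d i : BM Ω) : Ω → ℝ) ω * ((∑ i ∈ s, d i : BM Ω) : Ω → ℝ) ω = _
  rw [hcoe]
  rw [hcoe s (fun i => ∑ j ∈ s, mulBM (d i) (d j))]
  rw [Finset.sum_mul_sum]
  refine Finset.sum_congr rfl fun i _ => ?_
  rw [hcoe]
  rfl

end Helpers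
section Helpers2

variable {Ω : Type*} [MeasurableSpace Ω]

lemma BM.coe_sum (s : Finset ℕ) (g : ℕ → BM Ω) (ω : Ω) :
    ((∑ i ∈ s, g i : BM Ω) : Ω → ℝ) ω = ∑ i ∈ s, (g i : Ω → ℝ) ω := by
  induction s using Finset.induction_on with
  | empty => simp
  | insert h ih => simp_all [Finset.sum_insert]

/-- Bound on the second moment of a recentered variable. -/
lemma diag_bound (𝔼 : SLE Ω) (ξi : BM Ω) (lam K : ℝ)
    (hlam : lam ∈ Set.Icc (-𝔼.E (-ξi)) (𝔼.E ξi))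
    (hK : 𝔼.E (mulBM (ξi - constBM Ω (𝔼.E ξi)) (ξi - constBM Ω (𝔼.E ξi)))
      + (𝔼.E ξi + 𝔼.E (-ξi)) ^ 2 ≤ K) :
    𝔼.E (mulBM (ξi - constBM Ω lam) (ξi - constBM Ω lam)) ≤ 2 * K := by
  set m := 𝔼.E ξi with hm
  have hpt : ∀ ω, (mulBM (ξi - constBM Ω lam) (ξi - constBM Ω lam) : Ω → ℝ) ω ≤
      (((2 : ℝ) • mulBM (ξi - constBM Ω m) (ξi - constBM Ω m)
        + constBM Ω (2 * (m - lam) ^ 2) : BM Ω) : Ω → ℝ) ω := by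
    intro ω
    show ((ξi : Ω → ℝ) ω - lam) * ((ξi : Ω → ℝ) ω - lam) ≤
      2 * (((ξi : Ω → ℝ) ω - m) * ((ξi : Ω → ℝ) ω - m)) + 2 * (m - lam) ^ 2
    nlinarith [sq_nonneg ((ξi : Ω → ℝ) ω - m - (m - lam))]
  have h1 := 𝔼.mono _ _ hpt
  have h2 := 𝔼.subadd ((2 : ℝ) • mulBM (ξi - constBM Ω m) (ξi - constBM Ω m))
    (constBM Ω (2 * (m - lam) ^ 2))
  rw [𝔼.pos_homog 2 (by norm_num), 𝔼.E_const] at h2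
  have hw : 0 ≤ 𝔼.E ξi + 𝔼.E (-ξi) := by
    have h0 := 𝔼.subadd ξi (-ξi)
    rwa [add_neg_cancel, 𝔼.E_zero] at h0
  obtain ⟨hl1, hl2⟩ := hlam
  have hml : 0 ≤ m - lam := by rw [hm]; linarith
  have hml2 : m - lam ≤ 𝔼.E ξi + 𝔼.E (-ξi) := by rw [hm]; linarith
  nlinarith [h1, h2, hK]

/-- The second moment of the centered partial sum grows linearly, for any dominated `L`. -/
lemma L_sum_sq_bound (𝔼 : SLE Ω) (ξ : ℕ → BM Ω) (L₀ : BM Ω →ₗ[ℝ] ℝ) (hL₀ : Dominated 𝔼 L₀)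
    (K : ℝ) (n : ℕ)
    (hunc : ∀ i j, 1 ≤ i → 1 ≤ j → i ≠ j → Uncorrelated 𝔼 (ξ i) (ξ j))
    (hdiag : ∀ i, 1 ≤ i →
      𝔼.E (mulBM (ξ i - constBM Ω (L₀ (ξ i))) (ξ i - constBM Ω (L₀ (ξ i)))) ≤ 2 * K)
    (L : BM Ω →ₗ[ℝ] ℝ) (hL : Dominated 𝔼 L) :
    L (mulBM (∑ i ∈ Finset.Icc 1 n, (ξ i - constBM Ω (L₀ (ξ i))))
        (∑ i ∈ Finset.Icc 1 n, (ξ i - constBM Ω (L₀ (ξ i))))) ≤ 2 * K * n := by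
  rw [mulBM_sum_sum, map_sum]
  simp only [map_sum]
  have step : ∀ i ∈ Finset.Icc 1 n,
      ∑ j ∈ Finset.Icc 1 n,
        L (mulBM (ξ i - constBM Ω (L₀ (ξ i))) (ξ j - constBM Ω (L₀ (ξ j)))) ≤ 2 * K := by
    intro i hi
    have hi1 : 1 ≤ i := (Finset.mem_Icc.mp hi).1
    have heq : ∀ j ∈ Finset.Icc 1 n,
        L (mulBM (ξ i - constBM Ω (L₀ (ξ i))) (ξ j - constBM Ω (L₀ (ξ j))))
        = if j = i then L (mulBM (ξ i - constBM Ω (L₀ (ξ i))) (ξ i - constBM Ω (L₀ (ξ i))))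
          else 0 := by
      intro j hj
      have hj1 : 1 ≤ j := (Finset.mem_Icc.mp hj).1
      by_cases hij : j = i
      · simp [hij]
      · rw [if_neg hij]
        have hne : i ≠ j := fun h => hij h.symm
        rw [L_mul_shift hL (hunc i j hi1 hj1 hne) (L₀ (ξ i)) (L₀ (ξ j))]
        exact uncorr_mean_eq (hunc i j hi1 hj1 hne) hL hL₀
    rw [Finset.sum_congr rfl heq, Finset.sum_ite_eq' (Finset.Icc 1 n) i, if_pos hi]
    exact le_trans (hL _) (hdiag i hi1)
  calc ∑ i ∈ Finset.Icc 1 n, ∑ j ∈ Finset.Icc 1 n,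
        L (mulBM (ξ i - constBM Ω (L₀ (ξ i))) (ξ j - constBM Ω (L₀ (ξ j))))
      ≤ ∑ _i ∈ Finset.Icc 1 n, 2 * K := Finset.sum_le_sum step
    _ = 2 * K * n := by
        rw [Finset.sum_const, Nat.card_Icc]
        simp [Nat.add_sub_cancel, mul_comm]

end Helpers2
/-- The weak law of large numbers for sublinear expectations. -/
theorem weak_LLN (𝔼 : SLE Ω) (ξ : ℕ → BM Ω)
    (hunc : ∀ i j, 1 ≤ i → 1 ≤ j → i ≠ j → Uncorrelated 𝔼 (ξ i) (ξ j))
    (hbdd : ∃ K : ℝ, ∀ n, 1 ≤ n →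
      𝔼.E (mulBM (ξ n - constBM Ω (𝔼.E (ξ n))) (ξ n - constBM Ω (𝔼.E (ξ n)))) +
        (𝔼.E (ξ n) + 𝔼.E (-ξ n)) ^ 2 ≤ K) :
    ∃ lam : ℕ → ℝ, (∀ i, 1 ≤ i → lam i ∈ Set.Icc (-𝔼.E (-ξ i)) (𝔼.E (ξ i))) ∧
      ∀ ε > 0, Tendsto (fun n : ℕ =>
          𝔼.cap {ω | ε < |(1 / (n : ℝ)) * ∑ i ∈ Finset.Icc 1 n, ((ξ i : Ω → ℝ) ω - lam i)|})
        atTop (𝓝 0) := by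
  classical
  -- the hypotheses are contradictory if `Ω` is empty
  rcases isEmpty_or_nonempty Ω with hΩ | hΩ
  · exfalso
    have h0 : 𝔼.E (constBM Ω 0) = 0 := 𝔼.E_const 0
    have hconst : constBM Ω 0 = constBM Ω 1 :=
      Subtype.ext (funext fun ω => (IsEmpty.false ω).elim)
    rw [hconst, 𝔼.E_const 1] at h0
    norm_num at h0
  obtain ⟨K, hK⟩ := hbdd
  obtain ⟨L₀, hL₀, -⟩ := 𝔼.exists_dominated 0
  refine ⟨fun i => L₀ (ξ i), ?_, ?_⟩
  · intro i _
    constructor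
    · have := hL₀ (-ξ i); rw [map_neg] at this; linarith
    · exact hL₀ (ξ i)
  intro ε hε
  have hK0 : 0 ≤ K := by
    have h1 := hK 1 le_rfl
    have h2 : 0 ≤ 𝔼.E (mulBM (ξ 1 - constBM Ω (𝔼.E (ξ 1))) (ξ 1 - constBM Ω (𝔼.E (ξ 1)))) :=
      𝔼.E_nonneg _ fun ω => mul_self_nonneg _
    nlinarith [sq_nonneg (𝔼.E (ξ 1) + 𝔼.E (-ξ 1))]
  have hdiag : ∀ i, 1 ≤ i →
      𝔼.E (mulBM (ξ i - constBM Ω (L₀ (ξ i))) (ξ i - constBM Ω (L₀ (ξ i)))) ≤ 2 * K := by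
    intro i hi
    refine diag_bound 𝔼 (ξ i) (L₀ (ξ i)) K ⟨?_, hL₀ (ξ i)⟩ (hK i hi)
    have := hL₀ (-ξ i); rw [map_neg] at this; linarith
  -- the sets and their measurability
  set A : ℕ → Set Ω := fun n =>
    {ω | ε < |(1 / (n : ℝ)) * ∑ i ∈ Finset.Icc 1 n, ((ξ i : Ω → ℝ) ω - L₀ (ξ i))|} with hA
  have hmeasA : ∀ n, MeasurableSet (A n) := by
    intro n
    have hg : Measurable fun ω =>
        |(1 / (n : ℝ)) * ∑ i ∈ Finset.Icc 1 n, ((ξ i : Ω → ℝ) ω - L₀ (ξ i))| := by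
      apply Measurable.abs
      apply Measurable.const_mul
      exact Finset.measurable_sum _ fun i _ => (BM.measurable (ξ i)).sub measurable_const
    exact measurableSet_lt measurable_const hg
  have hcap : ∀ n, 𝔼.cap (A n) = 𝔼.E (indBM (A n) (hmeasA n)) := by
    intro n; rw [SLE.cap, dif_pos (hmeasA n)]
  -- lower bound
  have hlow : ∀ n, 0 ≤ 𝔼.cap (A n) := by
    intro n
    rw [hcap n]
    refine 𝔼.E_nonneg _ fun ω => ?_
    exact Set.indicator_nonneg (fun _ _ => zero_le_one) ω
  -- upper bound for n ≥ 1
  have hup : ∀ n : ℕ, 1 ≤ n → 𝔼.cap (A n) ≤ 2 * K / ε ^ 2 * (1 / n) := by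
    intro n hn
    have hnpos : (0 : ℝ) < n := by exact_mod_cast hn
    set S : BM Ω := ∑ i ∈ Finset.Icc 1 n, (ξ i - constBM Ω (L₀ (ξ i))) with hS
    have hScoe : ∀ ω, (S : Ω → ℝ) ω = ∑ i ∈ Finset.Icc 1 n, ((ξ i : Ω → ℝ) ω - L₀ (ξ i)) := by
      intro ω
      rw [hS, BM.coe_sum]
      exact Finset.sum_congr rfl fun i _ => rfl
    set c : ℝ := 1 / ((n : ℝ) ^ 2 * ε ^ 2) with hc
    have hcpos : 0 < c := by
      rw [hc]; positivity
    -- pointwise Chebyshev bound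
    have hpt : ∀ ω, (indBM (A n) (hmeasA n) : Ω → ℝ) ω ≤ ((c • mulBM S S : BM Ω) : Ω → ℝ) ω := by
      intro ω
      have hrhs : ((c • mulBM S S : BM Ω) : Ω → ℝ) ω = c * ((S : Ω → ℝ) ω * (S : Ω → ℝ) ω) := rfl
      rw [hrhs]
      show Set.indicator (A n) (fun _ => (1:ℝ)) ω ≤ c * ((S : Ω → ℝ) ω * (S : Ω → ℝ) ω)
      by_cases hω : ω ∈ A n
      · rw [Set.indicator_of_mem hω]
        have hωA : ε < |(1 / (n : ℝ)) * ∑ i ∈ Finset.Icc 1 n, ((ξ i : Ω → ℝ) ω - L₀ (ξ i))| := hω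
        rw [← hScoe ω] at hωA
        set x : ℝ := (S : Ω → ℝ) ω with hx
        rw [abs_mul, abs_of_pos (by positivity : (0:ℝ) < 1 / (n : ℝ))] at hωA
        have h1 : (n : ℝ) * ε < |x| := by
          rw [one_div_mul_eq_div, lt_div_iff₀ hnpos] at hωA
          nlinarith [hωA]
        have h2 : (n : ℝ) ^ 2 * ε ^ 2 < x * x := by
          have hxx := mul_lt_mul'' h1 h1 (by positivity) (by positivity)
          rw [abs_mul_abs_self] at hxx
          nlinarith [hxx]
        rw [hc, one_div, inv_mul_eq_div, le_div_iff₀ (by positivity)]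
        linarith
      · rw [Set.indicator_of_notMem hω]
        exact mul_nonneg hcpos.le (mul_self_nonneg _)
    -- bound for every dominated linear expectation
    have hbound : ∀ L : BM Ω →ₗ[ℝ] ℝ, Dominated 𝔼 L →
        L (indBM (A n) (hmeasA n)) ≤ 2 * K / ε ^ 2 * (1 / n) := by
      intro L hL
      have h1 : L (indBM (A n) (hmeasA n)) ≤ L (c • mulBM S S) := hL.monotone hpt
      rw [L.map_smul, smul_eq_mul] at h1
      have h2 : L (mulBM S S) ≤ 2 * K * n := by
        rw [hS]
        exact L_sum_sq_bound 𝔼 ξ L₀ hL₀ K n hunc hdiag L hL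
      have h3 : c * L (mulBM S S) ≤ c * (2 * K * n) :=
        mul_le_mul_of_nonneg_left h2 hcpos.le
      have h4 : c * (2 * K * n) = 2 * K / ε ^ 2 * (1 / n) := by
        rw [hc]
        field_simp
      linarith
    rw [hcap n]
    exact 𝔼.E_le_of_forall_dominated _ _ hbound
  -- squeeze
  have hten : Tendsto (fun n : ℕ => 2 * K / ε ^ 2 * (1 / n)) atTop (𝓝 0) := by
    have := tendsto_one_div_atTop_nhds_zero_nat.const_mul (2 * K / ε ^ 2)
    simpa using this
  refine tendsto_of_tendsto_of_tendsto_of_le_of_le' tendsto_const_nhds hten ?_ ?_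
  · exact Eventually.of_forall hlow
  · filter_upwards [eventually_ge_atTop 1] with n hn
    exact hup n hn
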